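/- Let L and I be quadratic monomial ideals in S = k[x_1,...,x_n] such that I is generated by a regular sequence of monomials (i.e., by pairwise coprime quadratic monomials), and suppose the minimal monomial generators m_1,...,m_d of L admit an ordering with linear quotients, i.e., (m_1,...,m_{i−1}) :_S m_i is generated by variables for each i. Then for Q = S/I and J_i the ideal of Q generated by the images of m_1,...,m_i, each colon ideal J_{i−1} :_Q (image of m_i) is either the unit ideal or generated by residue classes of variables. -/

import Mathlib

open MvPolynomial

set_option synthInstance.maxHeartbeats 1000000

section Aux

variable {n : ℕ}

lemma aux_deg_def (c : Fin n →₀ ℕ) : c.sum (fun _ e => e) = ∑ x, c x :=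
  Finsupp.sum_fintype _ _ (fun _ => rfl)

lemma aux_sub_le {t g α : Fin n →₀ ℕ} (h : t ≤ α + g) : t - t ⊓ g ≤ α := by
  rw [Finsupp.le_def] at h ⊢
  intro x
  have hx := h x
  rw [Finsupp.add_apply] at hx
  rw [Finsupp.tsub_apply, Finsupp.inf_apply]
  rcases le_total (t x) (g x) with h'|h'
  · rw [min_eq_left h']; omega
  · rw [min_eq_right h']; omega

lemma aux_le_add {t g : Fin n →₀ ℕ} : t ≤ (t - t ⊓ g) + g := by
  rw [Finsupp.le_def]
  intro x
  rw [Finsupp.add_apply, Finsupp.tsub_apply, Finsupp.inf_apply]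
  rcases le_total (t x) (g x) with h'|h'
  · rw [min_eq_left h']; omega
  · rw [min_eq_right h']; omega

lemma aux_sub_le_self {t g : Fin n →₀ ℕ} : t - t ⊓ g ≤ t := by
  rw [Finsupp.le_def]
  intro x
  rw [Finsupp.tsub_apply]
  omega

lemma aux_deg_sub {t g : Fin n →₀ ℕ} : (∑ x, (t - t ⊓ g) x) + ∑ x, (t ⊓ g) x = ∑ x, t x := by
  rw [← Finset.sum_add_distrib]
  refine Finset.sum_congr rfl fun x _ => ?_
  rw [Finsupp.tsub_apply, Finsupp.inf_apply]
  rcases le_total (t x) (g x) with h'|h'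
  · rw [min_eq_left h']; omega
  · rw [min_eq_right h']; omega

lemma aux_eq_zero {c : Fin n →₀ ℕ} (h : ∑ x, c x = 0) : c = 0 := by
  ext x
  have := (Finset.sum_eq_zero_iff).mp h x (Finset.mem_univ x)
  simpa using this

lemma aux_eq_single {c : Fin n →₀ ℕ} (h : ∑ x, c x = 1) : ∃ w, c = Finsupp.single w 1 := by
  have hne : ∃ w, c w ≠ 0 := by
    by_contra hc
    push_neg at hc
    rw [Finset.sum_eq_zero (fun x _ => hc x)] at h
    omega
  obtain ⟨w, hw⟩ := hne
  have hle : c w ≤ ∑ x, c x := Finset.single_le_sum (fun x _ => Nat.zero_le _) (Finset.mem_univ w)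
  have hcw : c w = 1 := by omega
  have hrest : ∑ x ∈ Finset.univ.erase w, c x = 0 := by
    have := Finset.add_sum_erase Finset.univ c (Finset.mem_univ w)
    omega
  refine ⟨w, ?_⟩
  ext x
  rcases eq_or_ne x w with rfl|hx
  · rw [hcw, Finsupp.single_eq_same]
  · rw [Finsupp.single_eq_of_ne hx]
    exact (Finset.sum_eq_zero_iff).mp hrest x (Finset.mem_erase.mpr ⟨hx, Finset.mem_univ x⟩)

lemma aux_eq_of_le_deg {c u : Fin n →₀ ℕ} (h : c ≤ u) (hd : ∑ x, c x = ∑ x, u x) : c = u := by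
  ext x
  exact (Finset.sum_eq_sum_iff_of_le (fun x _ => h x)).mp hd x (Finset.mem_univ x)

end Aux

section Ring

variable {k : Type*} [Field k] {n : ℕ}

lemma aux_mono_mem {T : Set (Fin n →₀ ℕ)} {t : Fin n →₀ ℕ} (h : ∃ s ∈ T, s ≤ t) :
    (monomial t (1 : k)) ∈ Ideal.span ((fun s => monomial s (1 : k)) '' T) := by
  classical
  rw [mem_ideal_span_monomial_image]
  intro xi hxi
  rw [support_monomial, if_neg one_ne_zero] at hxi
  rw [Finset.mem_singleton] at hxi
  subst hxi
  exact h

end Ring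

theorem stmt16 {k : Type*} [Field k] {n p d : ℕ}
    (u : Fin p → (Fin n →₀ ℕ)) (m : Fin d → (Fin n →₀ ℕ))
    (hu2 : ∀ j, (u j).sum (fun _ e => e) = 2)
    (hm2 : ∀ i, (m i).sum (fun _ e => e) = 2)
    (hcop : ∀ j j', j ≠ j' → Disjoint (u j).support (u j').support)
    (hlq : ∀ i : Fin d, ∃ V : Set (Fin n),
      (Ideal.span {f | ∃ i' : Fin d, i' < i ∧ f = MvPolynomial.monomial (m i') (1 : k)}).colon
          (Ideal.span {MvPolynomial.monomial (m i) (1 : k)}) =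
        Ideal.span ((MvPolynomial.X : Fin n → MvPolynomial (Fin n) k) '' V)) :
    ∀ i : Fin d,
      (Ideal.span {f | ∃ i' : Fin d, i' < i ∧ f =
            Ideal.Quotient.mk (Ideal.span (Set.range fun j => MvPolynomial.monomial (u j) (1 : k)))
              (MvPolynomial.monomial (m i') (1 : k))}).colon
          (Ideal.span {Ideal.Quotient.mk
            (Ideal.span (Set.range fun j => MvPolynomial.monomial (u j) (1 : k)))
            (MvPolynomial.monomial (m i) (1 : k))}) = ⊤ ∨
      ∃ V : Set (Fin n),
        (Ideal.span {f | ∃ i' : Fin d, i' < i ∧ f =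
              Ideal.Quotient.mk (Ideal.span (Set.range fun j => MvPolynomial.monomial (u j) (1 : k)))
                (MvPolynomial.monomial (m i') (1 : k))}).colon
            (Ideal.span {Ideal.Quotient.mk
              (Ideal.span (Set.range fun j => MvPolynomial.monomial (u j) (1 : k)))
              (MvPolynomial.monomial (m i) (1 : k))}) =
          Ideal.span ((fun v => Ideal.Quotient.mk
            (Ideal.span (Set.range fun j => MvPolynomial.monomial (u j) (1 : k)))
            (MvPolynomial.X v)) '' V) := by
  classical
  intro i
  set I : Ideal (MvPolynomial (Fin n) k) :=
    Ideal.span (Set.range fun j => MvPolynomial.monomial (u j) (1 : k)) with hI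
  set mk : MvPolynomial (Fin n) k →+* MvPolynomial (Fin n) k ⧸ I := Ideal.Quotient.mk I with hmk
  set g : MvPolynomial (Fin n) k := monomial (m i) (1 : k) with hg
  set Mset : Set (Fin n →₀ ℕ) := {s | ∃ i' : Fin d, i' < i ∧ s = m i'} with hMset
  set Jset : Set (MvPolynomial (Fin n) k) :=
    {f | ∃ i' : Fin d, i' < i ∧ f = monomial (m i') (1 : k)} with hJset
  set J : Ideal (MvPolynomial (Fin n) k) := Ideal.span Jset with hJ
  -- the generating set of J as monomial image
  have hJset_img : Jset = (fun s => monomial s (1 : k)) '' Mset := by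
    ext f
    constructor
    · rintro ⟨i', hi', rfl⟩; exact ⟨m i', ⟨i', hi', rfl⟩, rfl⟩
    · rintro ⟨s, ⟨i', hi', rfl⟩, rfl⟩; exact ⟨i', hi', rfl⟩
  -- I's generating set as monomial image
  have hIset_img : (Set.range fun j => MvPolynomial.monomial (u j) (1 : k)) =
      (fun s => monomial s (1 : k)) '' Set.range u := by
    rw [← Set.range_comp]; rfl
  -- the quotient numerator ideal is map mk J
  have hbar : Ideal.span {f | ∃ i' : Fin d, i' < i ∧ f = mk (monomial (m i') (1 : k))} =
      Ideal.map mk J := by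
    rw [hJ, Ideal.map_span]
    congr 1
    ext f
    constructor
    · rintro ⟨i', hi', rfl⟩; exact ⟨monomial (m i') 1, ⟨i', hi', rfl⟩, rfl⟩
    · rintro ⟨f', ⟨i', hi', rfl⟩, rfl⟩; exact ⟨i', hi', rfl⟩
  rw [hbar]
  by_cases hP : (∃ i' : Fin d, i' < i ∧ m i' ≤ m i) ∨ ∃ j, u j ≤ m i
  · -- top case
    left
    rw [Ideal.eq_top_iff_one, Ideal.mem_colon_span_singleton, one_mul]
    rcases hP with ⟨i', hi', hle⟩ | ⟨j, hle⟩
    · refine Ideal.mem_map_of_mem mk ?_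
      rw [hJ, hJset_img]
      exact aux_mono_mem ⟨m i', ⟨i', hi', rfl⟩, hle⟩
    · have hgI : g ∈ I := by
        rw [hI, hIset_img]
        exact aux_mono_mem ⟨u j, ⟨j, rfl⟩, hle⟩
      have : mk g = 0 := by
        rwa [hmk, Ideal.Quotient.eq_zero_iff_mem]
      rw [this]
      exact Ideal.zero_mem _
  · right
    push_neg at hP
    obtain ⟨hP1, hP2⟩ := hP
    obtain ⟨V, hV⟩ := hlq i
    set W : Set (Fin n) := {w | ∃ j, u j ≤ m i + Finsupp.single w 1} with hW
    refine ⟨V ∪ W, le_antisymm ?_ ?_⟩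
    · -- colon ⊆ span of variables
      intro q hq
      rw [Ideal.mem_colon_span_singleton] at hq
      obtain ⟨f, rfl⟩ := Ideal.Quotient.mk_surjective q
      rw [← map_mul] at hq
      -- f * g ∈ J + I
      obtain ⟨h, hhJ, hh⟩ := (Ideal.mem_map_iff_of_surjective mk Ideal.Quotient.mk_surjective).mp hq
      have hfg : f * g ∈ J ⊔ I := by
        have hdiff : f * g - h ∈ I := by
          rw [← Ideal.Quotient.mk_eq_mk_iff_sub_mem]
          exact hh.symm
        have : f * g = h + (f * g - h) := by ring
        rw [this]
        exact Ideal.add_mem _ (Ideal.mem_sup_left hhJ) (Ideal.mem_sup_right hdiff)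
      rw [hJ, hI, ← Ideal.span_union, hJset_img, hIset_img, ← Set.image_union,
        mem_ideal_span_monomial_image] at hfg
      -- claim : f ∈ span (monomials of singles over V ∪ W, together with u j's)
      have hf : f ∈ Ideal.span ((fun s => monomial s (1 : k)) ''
          ((fun v => Finsupp.single v 1) '' (V ∪ W) ∪ Set.range u)) := by
        rw [mem_ideal_span_monomial_image]
        intro α hα
        have hsupp : α + m i ∈ (f * g).support := by
          rw [MvPolynomial.mem_support_iff, hg, MvPolynomial.coeff_mul_monomial, mul_one]
          exact MvPolynomial.mem_support_iff.mp hα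
        obtain ⟨s, hs, hsle⟩ := hfg _ hsupp
        rcases hs with ⟨i', hi', rfl⟩ | ⟨j, rfl⟩
        · -- case m i'
          set c : Fin n →₀ ℕ := m i' - (m i' ⊓ m i) with hc
          have hcα : c ≤ α := aux_sub_le hsle
          have hcolon : (monomial c (1 : k)) ∈
              (Ideal.span Jset).colon (Ideal.span {monomial (m i) (1 : k)}) := by
            rw [Ideal.mem_colon_span_singleton, monomial_mul, one_mul, hJset_img]
            exact aux_mono_mem ⟨m i', ⟨i', hi', rfl⟩, aux_le_add⟩
          rw [hJset, hV] at hcolon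
          have : (MvPolynomial.X : Fin n → MvPolynomial (Fin n) k) '' V =
              (fun s => monomial s (1 : k)) '' ((fun v => Finsupp.single v 1) '' V) := by
            rw [Set.image_image]; rfl
          rw [this, mem_ideal_span_monomial_image] at hcolon
          obtain ⟨s', ⟨v, hv, rfl⟩, hsv⟩ := hcolon c (by
            rw [support_monomial, if_neg one_ne_zero]; exact Finset.mem_singleton_self c)
          exact ⟨Finsupp.single v 1, Or.inl ⟨v, Or.inl hv, rfl⟩, le_trans hsv hcα⟩
        · -- case u j
          set c : Fin n →₀ ℕ := u j - (u j ⊓ m i) with hc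
          have hcα : c ≤ α := aux_sub_le hsle
          have hdeg : (∑ x, c x) + ∑ x, (u j ⊓ m i) x = 2 := by
            rw [aux_deg_sub, ← aux_deg_def]; exact hu2 j
          have hcases : (∑ x, c x) = 0 ∨ (∑ x, c x) = 1 ∨ (∑ x, c x) = 2 := by omega
          rcases hcases with h0 | h1 | h2
          · exfalso
            have : u j ≤ m i := by
              have := aux_le_add (t := u j) (g := m i)
              rwa [← hc, aux_eq_zero h0, zero_add] at this
            exact hP2 j this
          · obtain ⟨w, hw⟩ := aux_eq_single h1
            have hwW : w ∈ W := by
              refine ⟨j, ?_⟩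
              have := aux_le_add (t := u j) (g := m i)
              rw [← hc, hw] at this
              rwa [add_comm] at this
            refine ⟨Finsupp.single w 1, Or.inl ⟨w, Or.inr hwW, rfl⟩, ?_⟩
            rw [← hw]; exact hcα
          · have hcu : c = u j := by
              refine aux_eq_of_le_deg aux_sub_le_self ?_
              rw [h2, ← aux_deg_def]; exact (hu2 j).symm
            exact ⟨u j, Or.inr ⟨j, rfl⟩, by rw [← hcu]; exact hcα⟩
      -- transfer to the quotient
      rw [Set.image_union] at hf
      have : Ideal.span ((fun v => mk (MvPolynomial.X v)) '' (V ∪ W)) =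
          Ideal.map mk (Ideal.span
            ((fun s => monomial s (1 : k)) '' ((fun v => Finsupp.single v 1) '' (V ∪ W)) ∪
              (fun s => monomial s (1 : k)) '' Set.range u)) := by
        rw [Ideal.map_span]
        have h1 : mk '' ((fun s => monomial s (1 : k)) '' ((fun v => Finsupp.single v 1) '' (V ∪ W)))
            = (fun v => mk (MvPolynomial.X v)) '' (V ∪ W) := by
          rw [Set.image_image, Set.image_image]; rfl
        have h2 : mk '' ((fun s => monomial s (1 : k)) '' Set.range u) = mk '' Set.range
            (fun j => MvPolynomial.monomial (u j) (1 : k)) := by rw [hIset_img]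
        conv_rhs => rw [Set.image_union]
        rw [h1, h2, Ideal.span_union]
        have h3 : Ideal.span (mk '' Set.range fun j => MvPolynomial.monomial (u j) (1 : k)) = ⊥ := by
          rw [← Ideal.map_span, ← hI, hmk, Ideal.map_quotient_self]
        rw [h3, sup_bot_eq]
      rw [this]
      exact Ideal.mem_map_of_mem mk hf
    · -- span of variables ⊆ colon
      rw [Ideal.span_le]
      rintro _ ⟨v, hv, rfl⟩
      rw [SetLike.mem_coe, Ideal.mem_colon_span_singleton, ← map_mul]
      have hXg : (MvPolynomial.X v : MvPolynomial (Fin n) k) * g =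
          monomial (Finsupp.single v 1 + m i) 1 := by
        rw [hg, X, monomial_mul, one_mul]
      rcases hv with hv | hv
      · -- v ∈ V : X v * g ∈ J
        have hXv : (MvPolynomial.X v : MvPolynomial (Fin n) k) ∈
            (Ideal.span Jset).colon (Ideal.span {monomial (m i) (1 : k)}) := by
          rw [hJset, hV]
          exact Ideal.subset_span ⟨v, hv, rfl⟩
        rw [Ideal.mem_colon_span_singleton] at hXv
        exact Ideal.mem_map_of_mem mk hXv
      · -- v ∈ W : X v * g ∈ I
        obtain ⟨j, hj⟩ := hv
        have hmem : (MvPolynomial.X v : MvPolynomial (Fin n) k) * g ∈ I := by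
          rw [hXg, hI, hIset_img]
          exact aux_mono_mem ⟨u j, ⟨j, rfl⟩, by rwa [add_comm]⟩
        have : mk ((MvPolynomial.X v : MvPolynomial (Fin n) k) * g) = 0 := by
          rwa [hmk, Ideal.Quotient.eq_zero_iff_mem]
        rw [this]
        exact Ideal.zero_mem _
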